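/- arXiv:1811.07808 — 5 statements merged into one kernel-verified Lean document; each statement's English description precedes it below -/
import Mathlib

section
/- Let d ≥ 1 be an integer and let α, β ∈ ℝ satisfy α + β > d, α < d and β < d. Then there exists a constant C > 0 such that for every n ∈ ℤ^d one has ∑_{n₁ ∈ ℤ^d} ⟨n₁⟩^{-α} ⟨n − n₁⟩^{-β} ≤ C ⟨n⟩^{d − α − β}. -/
set_option maxHeartbeats 1000000

/-- Japanese bracket of a lattice point `n ∈ ℤ^d`: `⟨n⟩ = (1 + |n|²)^{1/2}`
where `|·|` is the Euclidean norm. -/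
noncomputable def jb {d : ℕ} (n : Fin d → ℤ) : ℝ :=
  Real.sqrt (1 + ∑ i, ((n i : ℝ)) ^ 2)

open scoped ENNReal

namespace DCB

variable {d : ℕ}

lemma sum_sq_nonneg (n : Fin d → ℤ) : (0:ℝ) ≤ ∑ i, ((n i : ℝ)) ^ 2 := by positivity

lemma one_le_jb (n : Fin d → ℤ) : 1 ≤ jb n := by
  have h : (1:ℝ) ≤ 1 + ∑ i, ((n i : ℝ)) ^ 2 := le_add_of_nonneg_right (sum_sq_nonneg n)
  calc (1:ℝ) = Real.sqrt 1 := Real.sqrt_one.symm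
  _ ≤ jb n := Real.sqrt_le_sqrt h

lemma jb_pos (n : Fin d → ℤ) : 0 < jb n := lt_of_lt_of_le one_pos (one_le_jb n)

lemma jb_sq (n : Fin d → ℤ) : (jb n) ^ 2 = 1 + ∑ i, ((n i : ℝ)) ^ 2 :=
  Real.sq_sqrt (by linarith [sum_sq_nonneg n])

lemma abs_le_jb (n : Fin d → ℤ) (i : Fin d) : |(n i : ℝ)| ≤ jb n := by
  have h1 : ((n i : ℝ)) ^ 2 ≤ 1 + ∑ j, ((n j : ℝ)) ^ 2 := by
    have h0 : ((n i : ℝ)) ^ 2 ≤ ∑ j, ((n j : ℝ)) ^ 2 := by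
      simpa using Finset.single_le_sum (f := fun j => ((n j : ℝ)) ^ 2)
        (fun j _ => by positivity) (Finset.mem_univ i)
    linarith
  calc |(n i : ℝ)| = Real.sqrt (((n i : ℝ)) ^ 2) := (Real.sqrt_sq_eq_abs _).symm
  _ ≤ jb n := Real.sqrt_le_sqrt h1

lemma jb_add_le (x y : Fin d → ℤ) : jb (x + y) ≤ 2 * max (jb x) (jb y) := by
  set m := max (jb x) (jb y) with hm
  have hxm : jb x ≤ m := le_max_left _ _
  have hym : jb y ≤ m := le_max_right _ _
  have hx0 := jb_pos x; have hy0 := jb_pos y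
  have key : 1 + ∑ i, (((x + y) i : ℝ)) ^ 2 ≤ (2 * m) ^ 2 := by
    have hs : ∀ i ∈ Finset.univ, (((x + y) i : ℝ)) ^ 2 ≤
        2 * ((x i : ℝ)) ^ 2 + 2 * ((y i : ℝ)) ^ 2 := by
      intro i _
      have hxy : (((x + y) i : ℝ)) = (x i : ℝ) + (y i : ℝ) := by
        simp [Pi.add_apply]
      rw [hxy]; nlinarith [sq_nonneg ((x i : ℝ) - (y i : ℝ))]
    have hsum := Finset.sum_le_sum hs
    have hsplit : ∑ i, (2 * ((x i : ℝ)) ^ 2 + 2 * ((y i : ℝ)) ^ 2)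
        = 2 * (∑ i, ((x i : ℝ)) ^ 2) + 2 * (∑ i, ((y i : ℝ)) ^ 2) := by
      rw [Finset.sum_add_distrib, Finset.mul_sum, Finset.mul_sum]
    have hx2 := jb_sq x; have hy2 := jb_sq y
    have hxm2 : (jb x) ^ 2 ≤ m ^ 2 := by nlinarith
    have hym2 : (jb y) ^ 2 ≤ m ^ 2 := by nlinarith
    nlinarith [hsum, hsplit]
  calc jb (x + y) = Real.sqrt (1 + ∑ i, (((x + y) i : ℝ)) ^ 2) := rfl
  _ ≤ Real.sqrt ((2 * m) ^ 2) := Real.sqrt_le_sqrt key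
  _ = |2 * m| := Real.sqrt_sq_eq_abs _
  _ = 2 * m := abs_of_pos (by positivity)

/-- dyadic level of a lattice point -/
noncomputable def nu (n : Fin d → ℤ) : ℕ := Nat.log 2 ⌊jb n⌋₊

lemma floor_jb_pos (n : Fin d → ℤ) : 0 < ⌊jb n⌋₊ := Nat.floor_pos.mpr (one_le_jb n)

lemma two_pow_nu_le (n : Fin d → ℤ) : (2:ℝ) ^ (nu n) ≤ jb n := by
  have h1 : 2 ^ (nu n) ≤ ⌊jb n⌋₊ := Nat.pow_log_le_self 2 (floor_jb_pos n).ne'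
  calc (2:ℝ) ^ (nu n) ≤ (⌊jb n⌋₊ : ℝ) := by exact_mod_cast h1
  _ ≤ jb n := Nat.floor_le (jb_pos n).le

lemma jb_lt_two_pow (n : Fin d → ℤ) : jb n < (2:ℝ) ^ (nu n + 1) := by
  have h1 : ⌊jb n⌋₊ < 2 ^ (nu n + 1) := Nat.lt_pow_succ_log_self one_lt_two _
  have h2 : jb n < ⌊jb n⌋₊ + 1 := Nat.lt_floor_add_one _
  have h3 : (⌊jb n⌋₊ : ℝ) + 1 ≤ (2:ℝ) ^ (nu n + 1) := by exact_mod_cast h1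
  linarith

lemma tsum_const_le_of_injective {γ T : Type*} [Fintype T] {f : γ → T}
    (hf : Function.Injective f) (c : ℝ≥0∞) :
    ∑' _ : γ, c ≤ (Fintype.card T : ℝ≥0∞) * c := by
  calc ∑' _ : γ, c ≤ ∑' _ : T, c := ENNReal.tsum_comp_le_tsum_of_injective hf _
  _ = (Fintype.card T : ℝ≥0∞) * c := by
      rw [tsum_fintype]
      simp [Finset.sum_const, nsmul_eq_mul]

lemma master (g : ℕ → ℝ≥0∞) :
    ∑' m : Fin d → ℤ, g (nu m) ≤ ∑' j : ℕ, 2 ^ ((j + 3) * d) * g j := by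
  rw [← ENNReal.tsum_fiberwise (fun m : Fin d → ℤ => g (nu m)) nu]
  refine ENNReal.tsum_le_tsum fun j => ?_
  have hcongr : ∀ m : (nu ⁻¹' {j} : Set (Fin d → ℤ)), g (nu (m : Fin d → ℤ)) = g j := by
    rintro ⟨m, hm⟩; simp only [Set.mem_preimage, Set.mem_singleton_iff] at hm
    simp [hm]
  rw [tsum_congr hcongr]
  -- inject the fiber into a box
  have hmem : ∀ m : (nu ⁻¹' {j} : Set (Fin d → ℤ)), ∀ i,
      (m : Fin d → ℤ) i ∈ Finset.Icc (-(2 ^ (j + 1) : ℤ)) (2 ^ (j + 1)) := by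
    rintro ⟨m, hm⟩ i
    simp only [Set.mem_preimage, Set.mem_singleton_iff] at hm
    have h1 : |(m i : ℝ)| ≤ jb m := abs_le_jb m i
    have h2 : jb m < (2:ℝ) ^ (j + 1) := hm ▸ jb_lt_two_pow m
    have h3 : |(m i : ℝ)| ≤ (2:ℝ) ^ (j + 1) := by linarith
    have h4 : |m i| ≤ (2 ^ (j + 1) : ℤ) := by
      rw [← Int.cast_abs] at h3
      exact_mod_cast h3
    rw [Finset.mem_Icc]
    exact ⟨neg_le_of_abs_le h4, le_of_abs_le h4⟩
  set φ : (nu ⁻¹' {j} : Set (Fin d → ℤ)) →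
      (Fin d → (Finset.Icc (-(2 ^ (j + 1) : ℤ)) (2 ^ (j + 1)) : Finset ℤ)) :=
    fun m i => ⟨(m : Fin d → ℤ) i, hmem m i⟩ with hφ
  have hinj : Function.Injective φ := by
    intro a b hab
    apply Subtype.ext
    funext i
    have := congrFun hab i
    simpa [hφ] using congrArg Subtype.val this
  calc ∑' _ : (nu ⁻¹' {j} : Set (Fin d → ℤ)), g j
      ≤ (Fintype.card (Fin d → (Finset.Icc (-(2 ^ (j + 1) : ℤ)) (2 ^ (j + 1)) : Finset ℤ)) : ℝ≥0∞)
        * g j := tsum_const_le_of_injective hinj _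
  _ ≤ 2 ^ ((j + 3) * d) * g j := by
      refine mul_le_mul_left ?_ _
      have hcardIcc : (Finset.Icc (-(2 ^ (j + 1) : ℤ)) (2 ^ (j + 1))).card = 2 ^ (j + 2) + 1 := by
        rw [Int.card_Icc]
        have : (2 ^ (j + 1) : ℤ) + 1 - -(2 ^ (j + 1)) = ((2 ^ (j + 2) + 1 : ℕ) : ℤ) := by
          push_cast; ring
        rw [this, Int.toNat_natCast]
      have hcard : Fintype.card
          (Fin d → (Finset.Icc (-(2 ^ (j + 1) : ℤ)) (2 ^ (j + 1)) : Finset ℤ))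
          = (2 ^ (j + 2) + 1) ^ d := by
        simp [Fintype.card_pi, hcardIcc, Finset.prod_const]
      rw [hcard]
      have hnat : (2 ^ (j + 2) + 1) ^ d ≤ 2 ^ ((j + 3) * d) := by
        calc (2 ^ (j + 2) + 1) ^ d ≤ (2 ^ (j + 3)) ^ d := by
              apply Nat.pow_le_pow_left
              have : (1:ℕ) ≤ 2 ^ (j + 2) := Nat.one_le_two_pow
              calc 2 ^ (j + 2) + 1 ≤ 2 ^ (j + 2) + 2 ^ (j + 2) := by omega
              _ = 2 ^ (j + 3) := by ring
        _ = 2 ^ ((j + 3) * d) := by rw [← pow_mul]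
      exact_mod_cast hnat


lemma two_ne_zero' : (2:ℝ≥0∞) ≠ 0 := by norm_num
lemma two_ne_top' : (2:ℝ≥0∞) ≠ ⊤ := by norm_num

lemma ofReal_two_pow_rpow (k : ℕ) (y : ℝ) :
    ENNReal.ofReal (((2:ℝ) ^ k) ^ y) = (2:ℝ≥0∞) ^ ((k:ℝ) * y) := by
  rw [← Real.rpow_natCast 2 k, ← Real.rpow_mul (by norm_num)]
  rw [← ENNReal.ofReal_rpow_of_pos (by norm_num)]
  norm_num

lemma geom_sum_aux (t : ℝ) :
    ∑' i : ℕ, (2:ℝ≥0∞) ^ (-((i:ℝ) * t)) = (1 - (2:ℝ≥0∞) ^ (-t))⁻¹ := by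
  rw [← ENNReal.tsum_geometric]
  refine tsum_congr fun i => ?_
  rw [← ENNReal.rpow_natCast ((2:ℝ≥0∞) ^ (-t)) i, ← ENNReal.rpow_mul]
  congr 1; ring

lemma one_le_two_rpow {s : ℝ} (hs : 0 ≤ s) : (1:ℝ≥0∞) ≤ 2 ^ s := by
  have h := ENNReal.rpow_le_rpow_of_exponent_le (x := 2) (by norm_num) hs (y := 0)
  rwa [ENNReal.rpow_zero] at h

lemma geom_lt {t : ℝ} (ht : 0 < t) (X : ℝ) :
    ∑' j : ℕ, (if (2:ℝ) ^ j < X then (2:ℝ≥0∞) ^ ((j:ℝ) * t) else 0)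
      ≤ (1 - (2:ℝ≥0∞) ^ (-t))⁻¹ * ENNReal.ofReal (X ^ t) := by
  by_cases hX : X ≤ 1
  · have hz : ∀ j : ℕ, (if (2:ℝ) ^ j < X then (2:ℝ≥0∞) ^ ((j:ℝ) * t) else 0) = 0 := by
      intro j
      rw [if_neg]
      exact not_lt.mpr (hX.trans (one_le_pow₀ (by norm_num)))
    rw [tsum_congr hz, tsum_zero]
    exact zero_le
  · push_neg at hX
    set J := Nat.log 2 ⌊X⌋₊ with hJ
    have hfl : 1 ≤ ⌊X⌋₊ := Nat.le_floor (by exact_mod_cast hX.le)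
    have h2J : (2:ℝ) ^ J ≤ X := by
      have h := Nat.pow_log_le_self 2 (by omega : ⌊X⌋₊ ≠ 0)
      calc (2:ℝ) ^ J ≤ (⌊X⌋₊ : ℝ) := by exact_mod_cast h
      _ ≤ X := Nat.floor_le (by linarith)
    have hXJ : X < (2:ℝ) ^ (J + 1) := by
      have h1 : ⌊X⌋₊ < 2 ^ (J + 1) := Nat.lt_pow_succ_log_self one_lt_two _
      have h2 : X < ⌊X⌋₊ + 1 := Nat.lt_floor_add_one X
      have h3 : (⌊X⌋₊ : ℝ) + 1 ≤ (2:ℝ) ^ (J + 1) := by exact_mod_cast h1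
      linarith
    have hterm : ∀ j : ℕ, (if (2:ℝ) ^ j < X then (2:ℝ≥0∞) ^ ((j:ℝ) * t) else 0)
        ≤ (if j ≤ J then (2:ℝ≥0∞) ^ ((j:ℝ) * t) else 0) := by
      intro j
      split_ifs with h1 h2
      · exact le_refl _
      · exfalso
        have : (2:ℝ) ^ j < (2:ℝ) ^ (J + 1) := h1.trans hXJ
        have hj : j < J + 1 := by
          exact_mod_cast (pow_lt_pow_iff_right₀ (by norm_num : (1:ℝ) < 2)).mp this
        omega
      · exact zero_le
      · exact le_refl _
    calc ∑' j : ℕ, (if (2:ℝ) ^ j < X then (2:ℝ≥0∞) ^ ((j:ℝ) * t) else 0)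
        ≤ ∑' j : ℕ, (if j ≤ J then (2:ℝ≥0∞) ^ ((j:ℝ) * t) else 0) :=
          ENNReal.tsum_le_tsum hterm
    _ = ∑ j ∈ Finset.range (J + 1), (2:ℝ≥0∞) ^ ((j:ℝ) * t) := by
        rw [tsum_eq_sum (s := Finset.range (J + 1))
          (fun b hb => by rw [if_neg]; simp only [Finset.mem_range] at hb; omega)]
        refine Finset.sum_congr rfl fun j hj => ?_
        rw [if_pos]; simp only [Finset.mem_range] at hj; omega
    _ = ∑ j ∈ Finset.range (J + 1),
          (2:ℝ≥0∞) ^ ((J:ℝ) * t) * (2:ℝ≥0∞) ^ (-(((J - j : ℕ) : ℝ) * t)) := by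
        refine Finset.sum_congr rfl fun j hj => ?_
        simp only [Finset.mem_range] at hj
        rw [← ENNReal.rpow_add _ _ two_ne_zero' two_ne_top']
        congr 1
        have : ((J - j : ℕ) : ℝ) = (J : ℝ) - (j : ℝ) := by
          have : j ≤ J := by omega
          push_cast [this]; ring
        rw [this]; ring
    _ = (2:ℝ≥0∞) ^ ((J:ℝ) * t) *
          ∑ j ∈ Finset.range (J + 1), (2:ℝ≥0∞) ^ (-(((J - j : ℕ) : ℝ) * t)) := by
        rw [Finset.mul_sum]
    _ = (2:ℝ≥0∞) ^ ((J:ℝ) * t) *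
          ∑ i ∈ Finset.range (J + 1), (2:ℝ≥0∞) ^ (-((i : ℝ) * t)) := by
        congr 1
        have := Finset.sum_range_reflect (fun i => (2:ℝ≥0∞) ^ (-((i : ℝ) * t))) (J + 1)
        simpa using this
    _ ≤ (2:ℝ≥0∞) ^ ((J:ℝ) * t) * ∑' i : ℕ, (2:ℝ≥0∞) ^ (-((i : ℝ) * t)) := by
        gcongr
        exact ENNReal.sum_le_tsum _
    _ = (2:ℝ≥0∞) ^ ((J:ℝ) * t) * (1 - (2:ℝ≥0∞) ^ (-t))⁻¹ := by rw [geom_sum_aux]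
    _ ≤ ENNReal.ofReal (X ^ t) * (1 - (2:ℝ≥0∞) ^ (-t))⁻¹ := by
        gcongr
        rw [← ofReal_two_pow_rpow]
        exact ENNReal.ofReal_le_ofReal
          (Real.rpow_le_rpow (by positivity) h2J ht.le)
    _ = (1 - (2:ℝ≥0∞) ^ (-t))⁻¹ * ENNReal.ofReal (X ^ t) := mul_comm _ _

lemma geom_ge {s : ℝ} (hs : 0 < s) {X : ℝ} (hX : 0 < X) :
    ∑' j : ℕ, (if X < (2:ℝ) ^ (j + 1) then (2:ℝ≥0∞) ^ (-((j:ℝ) * s)) else 0)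
      ≤ (2:ℝ≥0∞) ^ s * (1 - (2:ℝ≥0∞) ^ (-s))⁻¹ * ENNReal.ofReal (X ^ (-s)) := by
  by_cases hX1 : X ≤ 1
  · calc ∑' j : ℕ, (if X < (2:ℝ) ^ (j + 1) then (2:ℝ≥0∞) ^ (-((j:ℝ) * s)) else 0)
        ≤ ∑' j : ℕ, (2:ℝ≥0∞) ^ (-((j:ℝ) * s)) :=
          ENNReal.tsum_le_tsum fun j => by split_ifs <;> simp
    _ = (1 - (2:ℝ≥0∞) ^ (-s))⁻¹ := geom_sum_aux s
    _ = 1 * (1 - (2:ℝ≥0∞) ^ (-s))⁻¹ * 1 := by ring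
    _ ≤ (2:ℝ≥0∞) ^ s * (1 - (2:ℝ≥0∞) ^ (-s))⁻¹ * ENNReal.ofReal (X ^ (-s)) := by
        gcongr
        · exact one_le_two_rpow hs.le
        · calc (1:ℝ≥0∞) = ENNReal.ofReal 1 := by simp
          _ ≤ ENNReal.ofReal (X ^ (-s)) := ENNReal.ofReal_le_ofReal (by
              have := Real.rpow_le_rpow_of_nonpos hX hX1 (neg_nonpos.mpr hs.le)
              simpa using this)
  · push_neg at hX1
    set J := Nat.log 2 ⌊X⌋₊ with hJ
    have hfl : 1 ≤ ⌊X⌋₊ := Nat.le_floor (by exact_mod_cast hX1.le)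
    have h2J : (2:ℝ) ^ J ≤ X := by
      have h := Nat.pow_log_le_self 2 (by omega : ⌊X⌋₊ ≠ 0)
      calc (2:ℝ) ^ J ≤ (⌊X⌋₊ : ℝ) := by exact_mod_cast h
      _ ≤ X := Nat.floor_le (by linarith)
    have hXJ : X < (2:ℝ) ^ (J + 1) := by
      have h1 : ⌊X⌋₊ < 2 ^ (J + 1) := Nat.lt_pow_succ_log_self one_lt_two _
      have h2 : X < ⌊X⌋₊ + 1 := Nat.lt_floor_add_one X
      have h3 : (⌊X⌋₊ : ℝ) + 1 ≤ (2:ℝ) ^ (J + 1) := by exact_mod_cast h1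
      linarith
    have hterm : ∀ j : ℕ, (if X < (2:ℝ) ^ (j + 1) then (2:ℝ≥0∞) ^ (-((j:ℝ) * s)) else 0)
        ≤ (if J ≤ j then (2:ℝ≥0∞) ^ (-((j:ℝ) * s)) else 0) := by
      intro j
      split_ifs with h1 h2
      · exact le_refl _
      · exfalso
        have : (2:ℝ) ^ J < (2:ℝ) ^ (j + 1) := lt_of_le_of_lt h2J h1
        have hj : J < j + 1 := by
          exact_mod_cast (pow_lt_pow_iff_right₀ (by norm_num : (1:ℝ) < 2)).mp this
        omega
      · exact zero_le
      · exact le_refl _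
    have hsplit := Summable.sum_add_tsum_nat_add' (f := fun j : ℕ =>
        (if J ≤ j then (2:ℝ≥0∞) ^ (-((j:ℝ) * s)) else 0)) (k := J) ENNReal.summable
    have hzero : ∑ i ∈ Finset.range J,
        (if J ≤ i then (2:ℝ≥0∞) ^ (-((i:ℝ) * s)) else 0) = 0 := by
      refine Finset.sum_eq_zero fun i hi => ?_
      simp only [Finset.mem_range] at hi
      rw [if_neg]; omega
    calc ∑' j : ℕ, (if X < (2:ℝ) ^ (j + 1) then (2:ℝ≥0∞) ^ (-((j:ℝ) * s)) else 0)
        ≤ ∑' j : ℕ, (if J ≤ j then (2:ℝ≥0∞) ^ (-((j:ℝ) * s)) else 0) :=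
          ENNReal.tsum_le_tsum hterm
    _ = ∑' i : ℕ, (if J ≤ i + J then (2:ℝ≥0∞) ^ (-(((i + J : ℕ):ℝ) * s)) else 0) := by
        rw [← hsplit, hzero, zero_add]
    _ = ∑' i : ℕ, (2:ℝ≥0∞) ^ (-((i:ℝ) * s)) * (2:ℝ≥0∞) ^ (-((J:ℝ) * s)) := by
        refine tsum_congr fun i => ?_
        rw [if_pos (by omega)]
        rw [← ENNReal.rpow_add _ _ two_ne_zero' two_ne_top']
        congr 1; push_cast; ring
    _ = (1 - (2:ℝ≥0∞) ^ (-s))⁻¹ * (2:ℝ≥0∞) ^ (-((J:ℝ) * s)) := by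
        rw [ENNReal.tsum_mul_right, geom_sum_aux]
    _ ≤ (1 - (2:ℝ≥0∞) ^ (-s))⁻¹ * ((2:ℝ≥0∞) ^ s * ENNReal.ofReal (X ^ (-s))) := by
        gcongr
        have key : (2:ℝ≥0∞) ^ (-((J:ℝ) * s)) =
            (2:ℝ≥0∞) ^ s * (2:ℝ≥0∞) ^ (((J + 1 : ℕ):ℝ) * (-s)) := by
          rw [← ENNReal.rpow_add _ _ two_ne_zero' two_ne_top']
          congr 1; push_cast; ring
        rw [key]
        gcongr
        rw [← ofReal_two_pow_rpow]
        exact ENNReal.ofReal_le_ofReal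
          (Real.rpow_le_rpow_of_nonpos hX hXJ.le (neg_nonpos.mpr hs.le))
    _ = (2:ℝ≥0∞) ^ s * (1 - (2:ℝ≥0∞) ^ (-s))⁻¹ * ENNReal.ofReal (X ^ (-s)) := by ring

lemma ofReal_le_rpow_nu {γ : ℝ} (hγ : 0 ≤ γ) (m : Fin d → ℤ) :
    ENNReal.ofReal (jb m ^ (-γ)) ≤ (2:ℝ≥0∞) ^ (-((nu m : ℝ) * γ)) := by
  have h : jb m ^ (-γ) ≤ ((2:ℝ) ^ (nu m)) ^ (-γ) :=
    Real.rpow_le_rpow_of_nonpos (by positivity) (two_pow_nu_le m) (neg_nonpos.mpr hγ)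
  calc ENNReal.ofReal (jb m ^ (-γ)) ≤ ENNReal.ofReal (((2:ℝ) ^ (nu m)) ^ (-γ)) :=
        ENNReal.ofReal_le_ofReal h
  _ = (2:ℝ≥0∞) ^ ((nu m : ℝ) * (-γ)) := ofReal_two_pow_rpow _ _
  _ = (2:ℝ≥0∞) ^ (-((nu m : ℝ) * γ)) := by congr 1; ring

lemma SB {γ : ℝ} (hγ0 : 0 < γ) (hγd : γ < (d:ℝ)) (X : ℝ) :
    ∑' m : Fin d → ℤ, ENNReal.ofReal (if jb m < X then jb m ^ (-γ) else 0)
      ≤ 2 ^ (3 * d) * (1 - (2:ℝ≥0∞) ^ (-((d:ℝ) - γ)))⁻¹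
        * ENNReal.ofReal (X ^ ((d:ℝ) - γ)) := by
  have step1 : ∀ m : Fin d → ℤ, ENNReal.ofReal (if jb m < X then jb m ^ (-γ) else 0)
      ≤ (fun j : ℕ => if (2:ℝ) ^ j < X then (2:ℝ≥0∞) ^ (-((j:ℝ) * γ)) else 0) (nu m) := by
    intro m
    by_cases h : jb m < X
    · simp only [if_pos h, if_pos (lt_of_le_of_lt (two_pow_nu_le m) h)]
      exact ofReal_le_rpow_nu hγ0.le m
    · simp only [if_neg h]
      simp
  calc ∑' m : Fin d → ℤ, ENNReal.ofReal (if jb m < X then jb m ^ (-γ) else 0)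
      ≤ ∑' m : Fin d → ℤ,
          (fun j : ℕ => if (2:ℝ) ^ j < X then (2:ℝ≥0∞) ^ (-((j:ℝ) * γ)) else 0) (nu m) :=
        ENNReal.tsum_le_tsum step1
  _ ≤ ∑' j : ℕ, 2 ^ ((j + 3) * d)
        * (if (2:ℝ) ^ j < X then (2:ℝ≥0∞) ^ (-((j:ℝ) * γ)) else 0) := master _
  _ = ∑' j : ℕ, 2 ^ (3 * d)
        * (if (2:ℝ) ^ j < X then (2:ℝ≥0∞) ^ ((j:ℝ) * ((d:ℝ) - γ)) else 0) := by
      refine tsum_congr fun j => ?_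
      split_ifs with h
      · rw [← ENNReal.rpow_natCast 2 ((j + 3) * d), ← ENNReal.rpow_natCast 2 (3 * d),
          ← ENNReal.rpow_add _ _ two_ne_zero' two_ne_top',
          ← ENNReal.rpow_add _ _ two_ne_zero' two_ne_top']
        congr 1; push_cast; ring
      · simp
  _ = 2 ^ (3 * d)
        * ∑' j : ℕ, (if (2:ℝ) ^ j < X then (2:ℝ≥0∞) ^ ((j:ℝ) * ((d:ℝ) - γ)) else 0) :=
      ENNReal.tsum_mul_left
  _ ≤ 2 ^ (3 * d) * ((1 - (2:ℝ≥0∞) ^ (-((d:ℝ) - γ)))⁻¹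
        * ENNReal.ofReal (X ^ ((d:ℝ) - γ))) :=
      mul_le_mul_right (geom_lt (by linarith) X) _
  _ = 2 ^ (3 * d) * (1 - (2:ℝ≥0∞) ^ (-((d:ℝ) - γ)))⁻¹
        * ENNReal.ofReal (X ^ ((d:ℝ) - γ)) := (mul_assoc _ _ _).symm

lemma ST {s : ℝ} (hds : (d:ℝ) < s) {X : ℝ} (hX : 0 < X) :
    ∑' m : Fin d → ℤ, ENNReal.ofReal (if X ≤ jb m then jb m ^ (-s) else 0)
      ≤ 2 ^ (3 * d) * ((2:ℝ≥0∞) ^ (s - (d:ℝ)) * (1 - (2:ℝ≥0∞) ^ (-(s - (d:ℝ))))⁻¹)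
        * ENNReal.ofReal (X ^ ((d:ℝ) - s)) := by
  have hs0 : 0 ≤ s := le_of_lt (lt_of_le_of_lt (Nat.cast_nonneg d) hds)
  have step1 : ∀ m : Fin d → ℤ, ENNReal.ofReal (if X ≤ jb m then jb m ^ (-s) else 0)
      ≤ (fun j : ℕ => if X < (2:ℝ) ^ (j + 1) then (2:ℝ≥0∞) ^ (-((j:ℝ) * s)) else 0) (nu m) := by
    intro m
    by_cases h : X ≤ jb m
    · simp only [if_pos h, if_pos (lt_of_le_of_lt h (jb_lt_two_pow m))]
      exact ofReal_le_rpow_nu hs0 m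
    · simp only [if_neg h]
      simp
  calc ∑' m : Fin d → ℤ, ENNReal.ofReal (if X ≤ jb m then jb m ^ (-s) else 0)
      ≤ ∑' m : Fin d → ℤ,
          (fun j : ℕ => if X < (2:ℝ) ^ (j + 1) then (2:ℝ≥0∞) ^ (-((j:ℝ) * s)) else 0)
            (nu m) := ENNReal.tsum_le_tsum step1
  _ ≤ ∑' j : ℕ, 2 ^ ((j + 3) * d)
        * (if X < (2:ℝ) ^ (j + 1) then (2:ℝ≥0∞) ^ (-((j:ℝ) * s)) else 0) := master _
  _ = ∑' j : ℕ, 2 ^ (3 * d)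
        * (if X < (2:ℝ) ^ (j + 1) then (2:ℝ≥0∞) ^ (-((j:ℝ) * (s - (d:ℝ)))) else 0) := by
      refine tsum_congr fun j => ?_
      split_ifs with h
      · rw [← ENNReal.rpow_natCast 2 ((j + 3) * d), ← ENNReal.rpow_natCast 2 (3 * d),
          ← ENNReal.rpow_add _ _ two_ne_zero' two_ne_top',
          ← ENNReal.rpow_add _ _ two_ne_zero' two_ne_top']
        congr 1; push_cast; ring
      · simp
  _ = 2 ^ (3 * d)
        * ∑' j : ℕ, (if X < (2:ℝ) ^ (j + 1) then (2:ℝ≥0∞) ^ (-((j:ℝ) * (s - (d:ℝ)))) else 0) :=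
      ENNReal.tsum_mul_left
  _ ≤ 2 ^ (3 * d) * ((2:ℝ≥0∞) ^ (s - (d:ℝ)) * (1 - (2:ℝ≥0∞) ^ (-(s - (d:ℝ))))⁻¹
        * ENNReal.ofReal (X ^ (-(s - (d:ℝ))))) :=
      mul_le_mul_right (geom_ge (by linarith) hX) _
  _ = 2 ^ (3 * d) * ((2:ℝ≥0∞) ^ (s - (d:ℝ)) * (1 - (2:ℝ≥0∞) ^ (-(s - (d:ℝ))))⁻¹)
        * ENNReal.ofReal (X ^ ((d:ℝ) - s)) := by
      rw [show -(s - (d:ℝ)) = (d:ℝ) - s from by ring, ← mul_assoc]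


lemma inv_one_sub_ne_top {t : ℝ} (ht : 0 < t) : (1 - (2:ℝ≥0∞) ^ (-t))⁻¹ ≠ ⊤ := by
  rw [Ne, ENNReal.inv_eq_top]
  intro h0
  have hlt : (2:ℝ≥0∞) ^ (-t) < 1 :=
    ENNReal.rpow_lt_one_of_one_lt_of_neg (by norm_num) (neg_lt_zero.mpr ht)
  have h1 : (1:ℝ≥0∞) ≤ (2:ℝ≥0∞) ^ (-t) := tsub_eq_zero_iff_le.mp h0
  exact absurd h1 (not_le.mpr hlt)

end DCB

theorem discrete_convolution_bound
    (d : ℕ) (hd : 1 ≤ d) (α β : ℝ)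
    (hαβ : (d : ℝ) < α + β) (hα : α < d) (hβ : β < d) :
    ∃ C : ℝ, 0 < C ∧ ∀ n : Fin d → ℤ,
      ∑' n₁ : Fin d → ℤ,
          ENNReal.ofReal (jb n₁ ^ (-α) * jb (n - n₁) ^ (-β))
        ≤ ENNReal.ofReal (C * jb n ^ ((d : ℝ) - α - β)) := by
  classical
  have hd' : (0:ℝ) < d := by exact_mod_cast hd
  have hα0 : 0 < α := by linarith
  have hβ0 : 0 < β := by linarith
  obtain ⟨K1, hK1⟩ : ∃ x : ℝ≥0∞, x = 2 ^ (3 * d) * (1 - (2:ℝ≥0∞) ^ (-((d:ℝ) - α)))⁻¹ := ⟨_, rfl⟩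
  obtain ⟨K2, hK2⟩ : ∃ x : ℝ≥0∞, x = 2 ^ (3 * d) * (1 - (2:ℝ≥0∞) ^ (-((d:ℝ) - β)))⁻¹ := ⟨_, rfl⟩
  obtain ⟨K3, hK3⟩ : ∃ x : ℝ≥0∞, x = 2 ^ (3 * d) * ((2:ℝ≥0∞) ^ ((α + β) - (d:ℝ))
      * (1 - (2:ℝ≥0∞) ^ (-((α + β) - (d:ℝ))))⁻¹) := ⟨_, rfl⟩
  obtain ⟨e, he⟩ : ∃ x : ℝ, x = (d:ℝ) - α - β := ⟨_, rfl⟩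
  obtain ⟨Dc, hDc⟩ : ∃ x : ℝ≥0∞, x = ENNReal.ofReal ((2:ℝ) ^ (-e)) := ⟨_, rfl⟩
  obtain ⟨E, hE⟩ : ∃ x : ℝ≥0∞, x = (K1 + K2 + K3 + K3) * Dc := ⟨_, rfl⟩
  have h2t : ∀ k : ℕ, ((2:ℝ≥0∞) ^ k) ≠ ⊤ := fun k => ENNReal.pow_ne_top (by norm_num)
  have hEne : E ≠ ⊤ := by
    have h1 : K1 ≠ ⊤ := by
      rw [hK1]; exact ENNReal.mul_ne_top (h2t _) (DCB.inv_one_sub_ne_top (by linarith))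
    have h2 : K2 ≠ ⊤ := by
      rw [hK2]; exact ENNReal.mul_ne_top (h2t _) (DCB.inv_one_sub_ne_top (by linarith))
    have h3 : K3 ≠ ⊤ := by
      rw [hK3]
      refine ENNReal.mul_ne_top (h2t _)
        (ENNReal.mul_ne_top ?_ (DCB.inv_one_sub_ne_top (by linarith)))
      exact ENNReal.rpow_ne_top_of_nonneg (by linarith) (by norm_num)
    rw [hE, hDc]
    exact ENNReal.mul_ne_top
      (ENNReal.add_ne_top.mpr ⟨ENNReal.add_ne_top.mpr ⟨ENNReal.add_ne_top.mpr ⟨h1, h2⟩, h3⟩, h3⟩)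
      ENNReal.ofReal_ne_top
  refine ⟨E.toReal + 1, by positivity, fun n => ?_⟩
  obtain ⟨N, hN⟩ : ∃ x : ℝ, x = jb n := ⟨_, rfl⟩
  rw [← hN, ← he]
  have hN1 : 1 ≤ N := hN ▸ DCB.one_le_jb n
  have hN0 : 0 < N := hN ▸ DCB.jb_pos n
  have hX0 : (0:ℝ) < N / 2 := by linarith
  -- pointwise cover bound
  have cover : ∀ n₁ : Fin d → ℤ,
      ENNReal.ofReal (jb n₁ ^ (-α) * jb (n - n₁) ^ (-β)) ≤
        ENNReal.ofReal ((N/2) ^ (-β))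
            * ENNReal.ofReal (if jb n₁ < N/2 then jb n₁ ^ (-α) else 0)
          + ENNReal.ofReal ((N/2) ^ (-α))
            * ENNReal.ofReal (if jb (n - n₁) < N/2 then jb (n - n₁) ^ (-β) else 0)
          + ENNReal.ofReal (if N/2 ≤ jb n₁ then jb n₁ ^ (-(α + β)) else 0)
          + ENNReal.ofReal (if N/2 ≤ jb (n - n₁) then jb (n - n₁) ^ (-(α + β)) else 0) := by
    intro n₁
    have ha0 : 0 < jb n₁ := DCB.jb_pos n₁
    have hb0 : 0 < jb (n - n₁) := DCB.jb_pos (n - n₁)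
    have hmax : N ≤ 2 * max (jb n₁) (jb (n - n₁)) := by
      have h := DCB.jb_add_le n₁ (n - n₁)
      rw [show n₁ + (n - n₁) = n from by ring] at h
      rw [hN]; exact h
    by_cases h1 : jb n₁ < N/2
    · have hb : N/2 ≤ jb (n - n₁) := by
        rcases le_or_gt (N/2) (jb (n - n₁)) with h | h
        · exact h
        · exfalso
          have hmm : max (jb n₁) (jb (n - n₁)) < N/2 := max_lt h1 h
          linarith
      have hre : jb n₁ ^ (-α) * jb (n - n₁) ^ (-β)
          ≤ (N/2) ^ (-β) * (if jb n₁ < N/2 then jb n₁ ^ (-α) else 0) := by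
        rw [if_pos h1]
        have hbb : jb (n - n₁) ^ (-β) ≤ (N/2) ^ (-β) :=
          Real.rpow_le_rpow_of_nonpos hX0 hb (neg_nonpos.mpr hβ0.le)
        calc jb n₁ ^ (-α) * jb (n - n₁) ^ (-β) ≤ jb n₁ ^ (-α) * (N/2) ^ (-β) :=
              mul_le_mul_of_nonneg_left hbb (Real.rpow_nonneg ha0.le _)
        _ = (N/2) ^ (-β) * jb n₁ ^ (-α) := mul_comm _ _
      calc ENNReal.ofReal (jb n₁ ^ (-α) * jb (n - n₁) ^ (-β))
          ≤ ENNReal.ofReal ((N/2) ^ (-β) * (if jb n₁ < N/2 then jb n₁ ^ (-α) else 0)) :=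
            ENNReal.ofReal_le_ofReal hre
      _ = ENNReal.ofReal ((N/2) ^ (-β))
            * ENNReal.ofReal (if jb n₁ < N/2 then jb n₁ ^ (-α) else 0) :=
            ENNReal.ofReal_mul (Real.rpow_nonneg hX0.le _)
      _ ≤ _ := le_add_right (le_add_right (le_add_right (le_refl _)))
    · push_neg at h1
      by_cases h2 : jb (n - n₁) < N/2
      · have hre : jb n₁ ^ (-α) * jb (n - n₁) ^ (-β)
            ≤ (N/2) ^ (-α) * (if jb (n - n₁) < N/2 then jb (n - n₁) ^ (-β) else 0) := by
          rw [if_pos h2]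
          have haa : jb n₁ ^ (-α) ≤ (N/2) ^ (-α) :=
            Real.rpow_le_rpow_of_nonpos hX0 h1 (neg_nonpos.mpr hα0.le)
          exact mul_le_mul_of_nonneg_right haa (Real.rpow_nonneg hb0.le _)
        calc ENNReal.ofReal (jb n₁ ^ (-α) * jb (n - n₁) ^ (-β))
            ≤ ENNReal.ofReal ((N/2) ^ (-α)
                * (if jb (n - n₁) < N/2 then jb (n - n₁) ^ (-β) else 0)) :=
              ENNReal.ofReal_le_ofReal hre
        _ = ENNReal.ofReal ((N/2) ^ (-α))
              * ENNReal.ofReal (if jb (n - n₁) < N/2 then jb (n - n₁) ^ (-β) else 0) :=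
              ENNReal.ofReal_mul (Real.rpow_nonneg hX0.le _)
        _ ≤ _ := le_add_right (le_add_right le_add_self)
      · push_neg at h2
        rcases le_total (jb n₁) (jb (n - n₁)) with hab | hab
        · have hre : jb n₁ ^ (-α) * jb (n - n₁) ^ (-β)
              ≤ (if N/2 ≤ jb n₁ then jb n₁ ^ (-(α + β)) else 0) := by
            rw [if_pos h1]
            have hbb : jb (n - n₁) ^ (-β) ≤ jb n₁ ^ (-β) :=
              Real.rpow_le_rpow_of_nonpos ha0 hab (neg_nonpos.mpr hβ0.le)
            calc jb n₁ ^ (-α) * jb (n - n₁) ^ (-β) ≤ jb n₁ ^ (-α) * jb n₁ ^ (-β) :=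
                  mul_le_mul_of_nonneg_left hbb (Real.rpow_nonneg ha0.le _)
            _ = jb n₁ ^ (-(α + β)) := by
                rw [← Real.rpow_add ha0]; congr 1; ring
          calc ENNReal.ofReal (jb n₁ ^ (-α) * jb (n - n₁) ^ (-β))
              ≤ ENNReal.ofReal (if N/2 ≤ jb n₁ then jb n₁ ^ (-(α + β)) else 0) :=
                ENNReal.ofReal_le_ofReal hre
          _ ≤ _ := le_add_right le_add_self
        · have hre : jb n₁ ^ (-α) * jb (n - n₁) ^ (-β)
              ≤ (if N/2 ≤ jb (n - n₁) then jb (n - n₁) ^ (-(α + β)) else 0) := by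
            rw [if_pos h2]
            have haa : jb n₁ ^ (-α) ≤ jb (n - n₁) ^ (-α) :=
              Real.rpow_le_rpow_of_nonpos hb0 hab (neg_nonpos.mpr hα0.le)
            calc jb n₁ ^ (-α) * jb (n - n₁) ^ (-β)
                ≤ jb (n - n₁) ^ (-α) * jb (n - n₁) ^ (-β) :=
                  mul_le_mul_of_nonneg_right haa (Real.rpow_nonneg hb0.le _)
            _ = jb (n - n₁) ^ (-(α + β)) := by
                rw [← Real.rpow_add hb0]; congr 1; ring
          calc ENNReal.ofReal (jb n₁ ^ (-α) * jb (n - n₁) ^ (-β))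
              ≤ ENNReal.ofReal (if N/2 ≤ jb (n - n₁) then jb (n - n₁) ^ (-(α + β)) else 0) :=
                ENNReal.ofReal_le_ofReal hre
          _ ≤ _ := le_add_self
  -- helper for (N/2)^u
  have hhalf : ∀ u : ℝ, ENNReal.ofReal ((N/2) ^ u)
      = ENNReal.ofReal ((2:ℝ) ^ (-u)) * ENNReal.ofReal (N ^ u) := by
    intro u
    rw [← ENNReal.ofReal_mul (by positivity)]
    congr 1
    rw [Real.div_rpow hN0.le (by norm_num : (0:ℝ) ≤ 2), Real.rpow_neg (by norm_num : (0:ℝ) ≤ 2),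
      div_eq_mul_inv, mul_comm]
  have hmergeA : ENNReal.ofReal ((N/2) ^ ((d:ℝ) - α)) * ENNReal.ofReal ((N/2) ^ (-β))
      = ENNReal.ofReal ((N/2) ^ e) := by
    rw [← ENNReal.ofReal_mul (by positivity), ← Real.rpow_add hX0,
      show (d:ℝ) - α + -β = e from by rw [he]; ring]
  have hmergeB : ENNReal.ofReal ((N/2) ^ ((d:ℝ) - β)) * ENNReal.ofReal ((N/2) ^ (-α))
      = ENNReal.ofReal ((N/2) ^ e) := by
    rw [← ENNReal.ofReal_mul (by positivity), ← Real.rpow_add hX0,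
      show (d:ℝ) - β + -α = e from by rw [he]; ring]
  have hhalfe : ENNReal.ofReal ((N/2) ^ e) = Dc * ENNReal.ofReal (N ^ e) := by
    rw [hhalf e, hDc]
  -- reindexing for pieces 2 and 4
  have hre2 : ∀ F : (Fin d → ℤ) → ℝ≥0∞,
      ∑' n₁ : Fin d → ℤ, F (n - n₁) = ∑' m : Fin d → ℤ, F m := by
    intro F
    have h := Equiv.tsum_eq (Equiv.subLeft n) F
    simpa [Equiv.subLeft_apply] using h
  have hS1 : ∑' n₁ : Fin d → ℤ, ENNReal.ofReal ((N/2) ^ (-β))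
        * ENNReal.ofReal (if jb n₁ < N/2 then jb n₁ ^ (-α) else 0)
      ≤ K1 * Dc * ENNReal.ofReal (N ^ e) := by
    rw [ENNReal.tsum_mul_left]
    calc ENNReal.ofReal ((N/2) ^ (-β))
          * ∑' n₁ : Fin d → ℤ, ENNReal.ofReal (if jb n₁ < N/2 then jb n₁ ^ (-α) else 0)
        ≤ ENNReal.ofReal ((N/2) ^ (-β)) * (K1 * ENNReal.ofReal ((N/2) ^ ((d:ℝ) - α))) := by
          rw [hK1]
          exact mul_le_mul_right (DCB.SB hα0 hα (N/2)) _
    _ = K1 * (ENNReal.ofReal ((N/2) ^ ((d:ℝ) - α)) * ENNReal.ofReal ((N/2) ^ (-β))) := by ring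
    _ = K1 * Dc * ENNReal.ofReal (N ^ e) := by rw [hmergeA, hhalfe, mul_assoc]
  have hS2 : ∑' n₁ : Fin d → ℤ, ENNReal.ofReal ((N/2) ^ (-α))
        * ENNReal.ofReal (if jb (n - n₁) < N/2 then jb (n - n₁) ^ (-β) else 0)
      ≤ K2 * Dc * ENNReal.ofReal (N ^ e) := by
    rw [ENNReal.tsum_mul_left,
      hre2 (fun m => ENNReal.ofReal (if jb m < N/2 then jb m ^ (-β) else 0))]
    calc ENNReal.ofReal ((N/2) ^ (-α))
          * ∑' m : Fin d → ℤ, ENNReal.ofReal (if jb m < N/2 then jb m ^ (-β) else 0)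
        ≤ ENNReal.ofReal ((N/2) ^ (-α)) * (K2 * ENNReal.ofReal ((N/2) ^ ((d:ℝ) - β))) := by
          rw [hK2]
          exact mul_le_mul_right (DCB.SB hβ0 hβ (N/2)) _
    _ = K2 * (ENNReal.ofReal ((N/2) ^ ((d:ℝ) - β)) * ENNReal.ofReal ((N/2) ^ (-α))) := by ring
    _ = K2 * Dc * ENNReal.ofReal (N ^ e) := by rw [hmergeB, hhalfe, mul_assoc]
  have hST : ∑' m : Fin d → ℤ,
        ENNReal.ofReal (if N/2 ≤ jb m then jb m ^ (-(α + β)) else 0)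
      ≤ K3 * Dc * ENNReal.ofReal (N ^ e) := by
    calc ∑' m : Fin d → ℤ, ENNReal.ofReal (if N/2 ≤ jb m then jb m ^ (-(α + β)) else 0)
        ≤ K3 * ENNReal.ofReal ((N/2) ^ ((d:ℝ) - (α + β))) := by
          rw [hK3]
          exact DCB.ST (by linarith) hX0
    _ = K3 * ENNReal.ofReal ((N/2) ^ e) := by
        rw [show (d:ℝ) - (α + β) = e from by rw [he]; ring]
    _ = K3 * Dc * ENNReal.ofReal (N ^ e) := by rw [hhalfe, mul_assoc]
  have hS4 : ∑' n₁ : Fin d → ℤ,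
        ENNReal.ofReal (if N/2 ≤ jb (n - n₁) then jb (n - n₁) ^ (-(α + β)) else 0)
      ≤ K3 * Dc * ENNReal.ofReal (N ^ e) := by
    rw [hre2 (fun m => ENNReal.ofReal (if N/2 ≤ jb m then jb m ^ (-(α + β)) else 0))]
    exact hST
  calc ∑' n₁ : Fin d → ℤ, ENNReal.ofReal (jb n₁ ^ (-α) * jb (n - n₁) ^ (-β))
      ≤ ∑' n₁ : Fin d → ℤ,
          (ENNReal.ofReal ((N/2) ^ (-β))
            * ENNReal.ofReal (if jb n₁ < N/2 then jb n₁ ^ (-α) else 0)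
          + ENNReal.ofReal ((N/2) ^ (-α))
            * ENNReal.ofReal (if jb (n - n₁) < N/2 then jb (n - n₁) ^ (-β) else 0)
          + ENNReal.ofReal (if N/2 ≤ jb n₁ then jb n₁ ^ (-(α + β)) else 0)
          + ENNReal.ofReal (if N/2 ≤ jb (n - n₁) then jb (n - n₁) ^ (-(α + β)) else 0)) :=
        ENNReal.tsum_le_tsum cover
  _ = (∑' n₁ : Fin d → ℤ, ENNReal.ofReal ((N/2) ^ (-β))
          * ENNReal.ofReal (if jb n₁ < N/2 then jb n₁ ^ (-α) else 0))
      + (∑' n₁ : Fin d → ℤ, ENNReal.ofReal ((N/2) ^ (-α))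
          * ENNReal.ofReal (if jb (n - n₁) < N/2 then jb (n - n₁) ^ (-β) else 0))
      + (∑' n₁ : Fin d → ℤ, ENNReal.ofReal (if N/2 ≤ jb n₁ then jb n₁ ^ (-(α + β)) else 0))
      + (∑' n₁ : Fin d → ℤ,
          ENNReal.ofReal (if N/2 ≤ jb (n - n₁) then jb (n - n₁) ^ (-(α + β)) else 0)) := by
      rw [ENNReal.tsum_add, ENNReal.tsum_add, ENNReal.tsum_add]
  _ ≤ K1 * Dc * ENNReal.ofReal (N ^ e) + K2 * Dc * ENNReal.ofReal (N ^ e)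
      + K3 * Dc * ENNReal.ofReal (N ^ e) + K3 * Dc * ENNReal.ofReal (N ^ e) :=
      add_le_add (add_le_add (add_le_add hS1 hS2) hST) hS4
  _ = E * ENNReal.ofReal (N ^ e) := by rw [hE]; ring
  _ ≤ ENNReal.ofReal (E.toReal + 1) * ENNReal.ofReal (N ^ e) := by
      gcongr
      calc E = ENNReal.ofReal E.toReal := (ENNReal.ofReal_toReal hEne).symm
      _ ≤ ENNReal.ofReal (E.toReal + 1) := ENNReal.ofReal_le_ofReal (by linarith)
  _ = ENNReal.ofReal ((E.toReal + 1) * N ^ e) := by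
      rw [← ENNReal.ofReal_mul (by positivity)]
end

section
/- For all vectors n₁, n₂ ∈ ℝ³, writing n = n₁ + n₂, one has ⟨n⟩ + ⟨n₂⟩ − ⟨n₁⟩ ≥ 2(|n||n₂| + n·n₂)/(⟨n⟩ + ⟨n₁⟩ + ⟨n₂⟩) ≥ 0. (When n, n₂ ≠ 0, the quantity |n||n₂| + n·n₂ equals |n||n₂|(1 − cos θ), where θ is the angle between n₂ and −n.) -/
open scoped RealInnerProductSpace

/-- Japanese bracket of `x ∈ ℝ³`: `⟨x⟩ = (1 + |x|²)^{1/2}`. -/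
noncomputable def jbE (x : EuclideanSpace ℝ (Fin 3)) : ℝ :=
  Real.sqrt (1 + ‖x‖ ^ 2)

lemma jbE_sq (x : EuclideanSpace ℝ (Fin 3)) : jbE x ^ 2 = 1 + ‖x‖ ^ 2 := by
  have : (0:ℝ) ≤ 1 + ‖x‖ ^ 2 := by positivity
  simp [jbE, Real.sq_sqrt this]

lemma one_le_jbE (x : EuclideanSpace ℝ (Fin 3)) : 1 ≤ jbE x := by
  have : (1:ℝ) = Real.sqrt 1 := by simp
  rw [this, jbE]
  exact Real.sqrt_le_sqrt (by nlinarith [sq_nonneg ‖x‖])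

lemma norm_le_jbE (x : EuclideanSpace ℝ (Fin 3)) : ‖x‖ ≤ jbE x := by
  have : ‖x‖ = Real.sqrt (‖x‖ ^ 2) := by
    rw [Real.sqrt_sq (norm_nonneg x)]
  rw [this, jbE]
  exact Real.sqrt_le_sqrt (by linarith)

theorem resonance_lower_bound
    (n₁ n₂ : EuclideanSpace ℝ (Fin 3)) :
    0 ≤ 2 * (‖n₁ + n₂‖ * ‖n₂‖ + ⟪n₁ + n₂, n₂⟫)
          / (jbE (n₁ + n₂) + jbE n₁ + jbE n₂) ∧
    2 * (‖n₁ + n₂‖ * ‖n₂‖ + ⟪n₁ + n₂, n₂⟫)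
          / (jbE (n₁ + n₂) + jbE n₁ + jbE n₂)
      ≤ jbE (n₁ + n₂) + jbE n₂ - jbE n₁ := by
  set n := n₁ + n₂ with hn
  have hD : 0 < jbE n + jbE n₁ + jbE n₂ := by
    have := one_le_jbE n; have := one_le_jbE n₁; have := one_le_jbE n₂; linarith
  have hCS : -(‖n‖ * ‖n₂‖) ≤ ⟪n, n₂⟫ := by
    have := abs_real_inner_le_norm n n₂
    have := abs_le.mp this
    linarith [this.1]
  have hnum : 0 ≤ 2 * (‖n‖ * ‖n₂‖ + ⟪n, n₂⟫) := by linarith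
  constructor
  · positivity
  · rw [div_le_iff₀ hD]
    have hexp : ‖n‖ ^ 2 = ‖n₁‖ ^ 2 + 2 * ⟪n₁, n₂⟫ + ‖n₂‖ ^ 2 := by
      rw [hn]; exact norm_add_sq_real n₁ n₂
    have hinn : ⟪n, n₂⟫ = ⟪n₁, n₂⟫ + ‖n₂‖ ^ 2 := by
      rw [hn, inner_add_left, real_inner_self_eq_norm_sq]
    have hac : ‖n‖ * ‖n₂‖ ≤ jbE n * jbE n₂ :=
      mul_le_mul (norm_le_jbE n) (norm_le_jbE n₂) (norm_nonneg _)
        (le_trans zero_le_one (one_le_jbE n))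
    have key : (jbE n + jbE n₂ - jbE n₁) * (jbE n + jbE n₁ + jbE n₂)
        = 1 + 2 * ⟪n, n₂⟫ + 2 * (jbE n * jbE n₂) := by
      have h1 := jbE_sq n; have h2 := jbE_sq n₁; have h3 := jbE_sq n₂
      nlinarith [h1, h2, h3, hexp, hinn]
    nlinarith [key, hac]
end

section
/- For every T > 0 there exists a constant C(T) > 0 (one may take C(T) = 2T³ + T⁴) such that for all real numbers κ₁, κ₂ and all t ∈ [0, T]: | ∫₀ᵗ e^{−iκ₁ t₁} ( ∫₀^{t₁} t₂² e^{−iκ₂ t₂} dt₂ ) dt₁ | ≤ C(T) (1 + |κ₁|)^{−1}. -/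
open MeasureTheory intervalIntegral

private lemma inner_bound (t : ℝ) (ht : 0 ≤ t) (κ₂ : ℝ) :
    ‖∫ t₂ in (0:ℝ)..t, (t₂ : ℂ) ^ 2 * Complex.exp (-Complex.I * κ₂ * t₂)‖ ≤ t ^ 3 / 3 := by
  have h := intervalIntegral.norm_integral_le_abs_of_norm_le (μ := volume) (a := 0) (b := t)
    (f := fun t₂ : ℝ => (t₂:ℂ)^2 * Complex.exp (-Complex.I * κ₂ * t₂)) (g := fun t₂ => t₂^2)
    (Filter.Eventually.of_forall fun x => by
      simp [Complex.norm_exp, _root_.sq_abs])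
    ((continuous_pow 2).intervalIntegrable 0 t)
  rw [integral_pow] at h
  refine h.trans (le_of_eq ?_)
  norm_num
  positivity

theorem oscillatory_integral_bound
    (T : ℝ) (hT : 0 < T) (κ₁ κ₂ : ℝ) (t : ℝ) (ht : t ∈ Set.Icc 0 T) :
    ‖∫ t₁ in (0:ℝ)..t, Complex.exp (-Complex.I * κ₁ * t₁) *
        ∫ t₂ in (0:ℝ)..t₁, (t₂ : ℂ) ^ 2 * Complex.exp (-Complex.I * κ₂ * t₂)‖
      ≤ (2 * T ^ 3 + T ^ 4) * (1 + |κ₁|)⁻¹ := by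
  obtain ⟨ht0, htT⟩ := ht
  set f : ℝ → ℂ := fun t₂ => (t₂:ℂ)^2 * Complex.exp (-Complex.I * κ₂ * t₂) with hf_def
  have hf : Continuous f := by fun_prop
  set F : ℝ → ℂ := fun x => ∫ t₂ in (0:ℝ)..x, f t₂ with hF_def
  have hFcont : Continuous F :=
    intervalIntegral.continuous_primitive (fun a b => hf.intervalIntegrable a b) 0
  have hFbound : ∀ x ∈ Set.uIoc (0:ℝ) t, ‖F x‖ ≤ T ^ 3 / 3 := by
    intro x hx
    rw [Set.uIoc_of_le ht0] at hx
    refine (inner_bound x hx.1.le κ₂).trans ?_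
    have : x ^ 3 ≤ T ^ 3 := pow_le_pow_left₀ hx.1.le (hx.2.trans htT) 3
    linarith
  rcases le_or_gt |κ₁| 1 with hκ | hκ
  · -- small frequency case: trivial size estimate
    have h := intervalIntegral.norm_integral_le_abs_of_norm_le (μ := volume) (a := 0) (b := t)
      (f := fun t₁ : ℝ => Complex.exp (-Complex.I * κ₁ * t₁) * F t₁)
      (g := fun _ => T ^ 3 / 3)
      (by
        rw [MeasureTheory.ae_restrict_iff' measurableSet_uIoc]
        refine Filter.Eventually.of_forall fun x hx => ?_
        rw [norm_mul]
        have h1 : ‖Complex.exp (-Complex.I * κ₁ * x)‖ = 1 := by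
          simp [Complex.norm_exp]
        rw [h1, one_mul]
        exact hFbound x hx)
      (intervalIntegrable_const)
    simp only [intervalIntegral.integral_const, smul_eq_mul, sub_zero] at h
    refine h.trans ?_
    have habs : |t * (T ^ 3 / 3)| ≤ T * (T ^ 3 / 3) := by
      rw [abs_of_nonneg (by positivity)]
      have := pow_pos hT 3
      nlinarith
    refine habs.trans ?_
    have hinv : (1:ℝ)/2 ≤ (1 + |κ₁|)⁻¹ := by
      rw [one_div]
      exact inv_anti₀ (by positivity) (by linarith)
    have hpos3 := pow_pos hT 3
    have hpos4 := pow_pos hT 4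
    calc T * (T ^ 3 / 3) = T ^ 4 / 3 := by ring
      _ ≤ (2 * T ^ 3 + T ^ 4) * (1/2) := by nlinarith
      _ ≤ (2 * T ^ 3 + T ^ 4) * (1 + |κ₁|)⁻¹ := by
          apply mul_le_mul_of_nonneg_left hinv (by positivity)
  · -- large frequency case: integration by parts
    have hκ0 : κ₁ ≠ 0 := by intro h; rw [h, abs_zero] at hκ; linarith
    set c : ℂ := -Complex.I * κ₁ with hc_def
    have hc0 : c ≠ 0 := by
      simp [hc_def, Complex.ext_iff, hκ0]
    have hcnorm : ‖c‖ = |κ₁| := by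
      simp [hc_def, Complex.norm_real]
    have hexp_deriv : ∀ x : ℝ, HasDerivAt (fun x : ℝ => Complex.exp (c * x))
        (c * Complex.exp (c * x)) x := by
      intro x
      have h1 : HasDerivAt (fun x : ℝ => c * (x:ℂ)) c x := by
        simpa using (Complex.ofRealCLM.hasDerivAt (x := x)).const_mul c
      simpa [mul_comm] using h1.cexp
    have hv_deriv : ∀ x : ℝ, HasDerivAt (fun x : ℝ => Complex.exp (c * x) / c)
        (Complex.exp (c * x)) x := by
      intro x
      have := (hexp_deriv x).div_const c
      simpa [mul_div_assoc, mul_div_cancel_left₀ _ hc0] using this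
    have hF_deriv : ∀ x : ℝ, HasDerivAt F (f x) x := fun x =>
      intervalIntegral.integral_hasDerivAt_right (hf.intervalIntegrable 0 x)
        (hf.stronglyMeasurableAtFilter _ _) hf.continuousAt
    have hexpnorm : ∀ x : ℝ, ‖Complex.exp (c * x)‖ = 1 := by
      intro x; simp [hc_def, Complex.norm_exp]
    -- integration by parts
    have ibp := intervalIntegral.integral_mul_deriv_eq_deriv_mul (a := 0) (b := t)
      (u := F) (v := fun x => Complex.exp (c * x) / c)
      (u' := f) (v' := fun x => Complex.exp (c * x))
      (fun x _ => hF_deriv x) (fun x _ => hv_deriv x)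
      (hf.intervalIntegrable 0 t)
      ((Continuous.intervalIntegrable (by fun_prop) 0 t))
    have hF0 : F 0 = 0 := intervalIntegral.integral_same
    have heq : (∫ t₁ in (0:ℝ)..t, Complex.exp (-Complex.I * κ₁ * t₁) * F t₁)
        = ∫ x in (0:ℝ)..t, F x * Complex.exp (c * x) := by
      apply intervalIntegral.integral_congr
      intro x _
      simp [hc_def, mul_comm]
    rw [heq, ibp, hF0, zero_mul, sub_zero]
    -- now bound the two terms
    have hterm1 : ‖F t * (Complex.exp (c * t) / c)‖ ≤ (T ^ 3 / 3) / |κ₁| := by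
      rw [norm_mul, norm_div, hexpnorm, hcnorm, mul_one_div]
      have hFt : ‖F t‖ ≤ T ^ 3 / 3 := by
        refine (inner_bound t ht0 κ₂).trans ?_
        have : t ^ 3 ≤ T ^ 3 := pow_le_pow_left₀ ht0 htT 3
        linarith
      have hκp : (0:ℝ) < |κ₁| := by linarith
      exact div_le_div_of_nonneg_right hFt hκp.le
    have hterm2 : ‖∫ x in (0:ℝ)..t, f x * (Complex.exp (c * x) / c)‖ ≤ (T ^ 3 / 3) / |κ₁| := by
      have h := intervalIntegral.norm_integral_le_abs_of_norm_le (μ := volume) (a := 0) (b := t)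
        (f := fun x : ℝ => f x * (Complex.exp (c * x) / c))
        (g := fun x => x ^ 2 / |κ₁|)
        (Filter.Eventually.of_forall fun x => by
          rw [norm_mul, norm_div, hexpnorm, hcnorm, hf_def]
          simp only []
          rw [norm_mul]
          have h1 : ‖Complex.exp (-Complex.I * κ₂ * x)‖ = 1 := by simp [Complex.norm_exp]
          rw [h1, mul_one]
          simp [_root_.sq_abs, div_eq_mul_inv])
        (by apply Continuous.intervalIntegrable; fun_prop)
      refine h.trans ?_
      have heval : (∫ x in (0:ℝ)..t, x ^ 2 / |κ₁|) = (t ^ 3 / 3) / |κ₁| := by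
        rw [intervalIntegral.integral_div, integral_pow]
        norm_num
      rw [heval, abs_of_nonneg (by positivity)]
      have h3 : t ^ 3 ≤ T ^ 3 := pow_le_pow_left₀ ht0 htT 3
      have hκpos : (0:ℝ) < |κ₁| := by linarith
      exact div_le_div_of_nonneg_right (by linarith) hκpos.le
    have htot : ‖F t * (Complex.exp (c * t) / c) - ∫ x in (0:ℝ)..t, f x * (Complex.exp (c * x) / c)‖
        ≤ 2 * (T ^ 3 / 3) / |κ₁| := by
      refine (norm_sub_le _ _).trans ?_
      have : (T ^ 3 / 3) / |κ₁| + (T ^ 3 / 3) / |κ₁| = 2 * (T ^ 3 / 3) / |κ₁| := by ring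
      linarith [hterm1, hterm2]
    refine htot.trans ?_
    have hκpos : (0:ℝ) < |κ₁| := by linarith
    rw [div_le_iff₀ hκpos]
    have h2 : (0:ℝ) < 1 + |κ₁| := by linarith
    rw [mul_comm ((2 * T ^ 3 + T ^ 4)) _, inv_mul_eq_div, div_mul_eq_mul_div, le_div_iff₀ h2]
    have hpos3 := pow_pos hT 3
    have hpos4 := pow_pos hT 4
    nlinarith [hpos3, hpos4, hκ, hκpos]
end

section
/- There exists an absolute constant C > 0 such that for every unit vector v ∈ ℝ³, every real N ≥ 1 and every θ ∈ (0, 1], the number of lattice points m ∈ ℤ³ with 0 < |m| ≤ N and m·v ≥ |m| cos θ (i.e. the angle between m and v is at most θ) is at most C N (Nθ + 1)². -/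
/-- Euclidean norm of a lattice point `m ∈ ℤ³`. -/
noncomputable def enorm' (m : Fin 3 → ℤ) : ℝ :=
  Real.sqrt (∑ i, ((m i : ℝ)) ^ 2)

set_option maxHeartbeats 2000000 in
lemma cone_aux (v : Fin 3 → ℝ) (hv2 : ∑ j, (v j) ^ 2 = 1)
    (N : ℝ) (hN : 1 ≤ N) (θ : ℝ) (hθ : 0 < θ) (hθ1 : θ ≤ 1) :
    (Set.ncard {m : Fin 3 → ℤ |
        0 < enorm' m ∧ enorm' m ≤ N ∧
        enorm' m * Real.cos θ ≤ ∑ i, (m i : ℝ) * v i} : ℝ)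
      ≤ 300 * N * (N * θ + 1) ^ 2 := by
  set S := {m : Fin 3 → ℤ |
      0 < enorm' m ∧ enorm' m ≤ N ∧
      enorm' m * Real.cos θ ≤ ∑ i, (m i : ℝ) * v i} with hSdef
  -- ∑ v i ^ 2 = 1
  have hvle : ∀ j, (v j) ^ 2 ≤ 1 := by
    intro j
    rw [← hv2]
    exact Finset.single_le_sum (f := fun j => (v j)^2)
      (fun j _ => sq_nonneg _) (Finset.mem_univ j)
  -- some coordinate of v is large
  obtain ⟨i, hi⟩ : ∃ i, (1:ℝ)/3 ≤ (v i) ^ 2 := by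
    by_contra h
    push_neg at h
    have : ∑ j, (v j) ^ 2 < ∑ _j : Fin 3, (1:ℝ)/3 :=
      Finset.sum_lt_sum_of_nonempty (by simp) fun j _ => h j
    simp at this
    linarith
  have hcos : 0 < Real.cos θ := by
    have hpi := Real.pi_gt_three
    apply Real.cos_pos_of_mem_Ioo
    constructor <;> [linarith; linarith]
  have hsin : Real.sin θ ≤ θ := Real.sin_le hθ.le
  have hsin0 : 0 ≤ Real.sin θ := Real.sin_nonneg_of_nonneg_of_le_pi hθ.le
    (by have := Real.pi_gt_three; linarith)
  have hNθ : 0 ≤ N * θ := by positivity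
  -- the inner product
  set a : (Fin 3 → ℤ) → ℝ := fun m => ∑ j, (m j : ℝ) * v j with ha
  -- key geometric facts for members of S
  have key : ∀ m ∈ S, (0 ≤ a m ∧ a m ≤ N) ∧
      ∀ j, |(m j : ℝ) - a m * v j| ≤ N * θ := by
    intro m hm
    obtain ⟨he0, heN, hang⟩ := hm
    set e := enorm' m with hedef
    have hsum0 : (0:ℝ) ≤ ∑ j, ((m j : ℝ)) ^ 2 :=
      Finset.sum_nonneg fun j _ => sq_nonneg _
    have he2 : e ^ 2 = ∑ j, ((m j : ℝ)) ^ 2 := Real.sq_sqrt hsum0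
    have ha0 : 0 ≤ a m := le_trans (by positivity) hang
    -- Cauchy–Schwarz
    have hv2' : v 0 ^ 2 + v 1 ^ 2 + v 2 ^ 2 = 1 := by
      rw [← hv2, Fin.sum_univ_three]
    have haval : a m = ∑ j, (m j : ℝ) * v j := rfl
    have hcs : (a m) ^ 2 ≤ e ^ 2 := by
      rw [he2, haval]
      simp only [Fin.sum_univ_three]
      nlinarith [sq_nonneg ((m 0 : ℝ) * v 1 - (m 1 : ℝ) * v 0),
        sq_nonneg ((m 0 : ℝ) * v 2 - (m 2 : ℝ) * v 0),
        sq_nonneg ((m 1 : ℝ) * v 2 - (m 2 : ℝ) * v 1), hv2']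
    have haN : a m ≤ N := by
      have : a m ≤ e := by nlinarith
      linarith
    refine ⟨⟨ha0, haN⟩, ?_⟩
    -- the perpendicular part is small
    have hperp : ∑ j, ((m j : ℝ) - a m * v j) ^ 2 ≤ (N * θ) ^ 2 := by
      have hexp : ∑ j, ((m j : ℝ) - a m * v j) ^ 2
          = (∑ j, ((m j : ℝ)) ^ 2) - 2 * (a m) * (∑ j, (m j : ℝ) * v j)
            + (a m) ^ 2 * ∑ j, (v j) ^ 2 := by
        simp only [Fin.sum_univ_three]
        ring
      rw [hexp, hv2, ← haval, ← he2]
      have h1 : e * Real.cos θ ≤ a m := hang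
      have h2 : (e * Real.cos θ) ^ 2 ≤ (a m) ^ 2 := by
        nlinarith [mul_nonneg he0.le hcos.le]
      have h3 : Real.cos θ ^ 2 = 1 - Real.sin θ ^ 2 := by
        have := Real.sin_sq_add_cos_sq θ
        linarith
      have h4 : e * Real.sin θ ≤ N * θ :=
        mul_le_mul heN hsin hsin0 (by linarith)
      nlinarith [mul_nonneg he0.le hsin0]
    intro j
    have hj : ((m j : ℝ) - a m * v j) ^ 2 ≤ (N * θ) ^ 2 := by
      refine le_trans ?_ hperp
      exact Finset.single_le_sum (f := fun j => ((m j : ℝ) - a m * v j) ^ 2)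
        (fun j _ => sq_nonneg _) (Finset.mem_univ j)
    calc |(m j : ℝ) - a m * v j| = Real.sqrt (((m j : ℝ) - a m * v j) ^ 2) :=
          (Real.sqrt_sq_eq_abs _).symm
      _ ≤ Real.sqrt ((N * θ) ^ 2) := Real.sqrt_le_sqrt hj
      _ = N * θ := Real.sqrt_sq hNθ
  -- the injection
  set B : ℤ := ⌈N * θ⌉ + 2 with hB
  set f : (Fin 3 → ℤ) → ℤ × ℤ × ℤ × ZMod 2 := fun m =>
    (⌊a m⌋, m (i + 1) - round ((⌊a m⌋ : ℝ) * v (i + 1)),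
      m (i + 2) - round ((⌊a m⌋ : ℝ) * v (i + 2)), ((m i : ℤ) : ZMod 2)) with hf
  set T : Finset (ℤ × ℤ × ℤ × ZMod 2) :=
    Finset.Icc (0:ℤ) ⌈N⌉ ×ˢ Finset.Icc (-B) B ×ˢ Finset.Icc (-B) B ×ˢ
      (Finset.univ : Finset (ZMod 2)) with hT
  -- every index is i, i+1 or i+2
  have hcover : ∀ j : Fin 3, j = i ∨ j = i + 1 ∨ j = i + 2 := by
    fin_cases i <;> decide
  have hsum3 : ∀ g : Fin 3 → ℝ, ∑ j, g j = g i + g (i + 1) + g (i + 2) := by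
    fin_cases i <;> intro g <;> simp [Fin.sum_univ_three] <;> ring
  -- injectivity on S
  have hinj : Set.InjOn f S := by
    intro m hm m' hm' hfe
    have ht : ⌊a m⌋ = ⌊a m'⌋ := congrArg Prod.fst hfe
    have h1 : m (i + 1) = m' (i + 1) := by
      have := congrArg (fun p => p.2.1) hfe
      simp only [hf] at this
      rw [ht] at this
      omega
    have h2 : m (i + 2) = m' (i + 2) := by
      have := congrArg (fun p => p.2.2.1) hfe
      simp only [hf] at this
      rw [ht] at this
      omega
    have hpar : ((m i : ℤ) : ZMod 2) = ((m' i : ℤ) : ZMod 2) :=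
      congrArg (fun p => p.2.2.2) hfe
    have hdvd : (2:ℤ) ∣ (m' i - m i) :=
      ((ZMod.intCast_eq_intCast_iff _ _ _).mp hpar).dvd
    -- the i-th coordinates are close
    have hflm := Int.floor_le (a m)
    have hflm' := Int.lt_floor_add_one (a m')
    have hflm2 := Int.lt_floor_add_one (a m)
    have hflm2' := Int.floor_le (a m')
    have habs : (a m - a m') ^ 2 < 1 := by
      have h1 : a m - a m' < 1 := by
        have : (⌊a m'⌋ : ℝ) = (⌊a m⌋ : ℝ) := by exact_mod_cast ht.symm
        nlinarith
      have h2 : a m' - a m < 1 := by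
        have : (⌊a m'⌋ : ℝ) = (⌊a m⌋ : ℝ) := by exact_mod_cast ht.symm
        nlinarith
      nlinarith
    have hd : a m - a m' = ((m i : ℝ) - (m' i : ℝ)) * v i := by
      have e1 : a m = (m i : ℝ) * v i + (m (i+1) : ℝ) * v (i+1)
          + (m (i+2) : ℝ) * v (i+2) := hsum3 fun j => (m j : ℝ) * v j
      have e2 : a m' = (m' i : ℝ) * v i + (m' (i+1) : ℝ) * v (i+1)
          + (m' (i+2) : ℝ) * v (i+2) := hsum3 fun j => (m' j : ℝ) * v j
      rw [e1, e2, h1, h2]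
      ring
    have hsq : ((m i : ℝ) - (m' i : ℝ)) ^ 2 * (v i) ^ 2 < 1 := by
      calc ((m i : ℝ) - (m' i : ℝ)) ^ 2 * (v i) ^ 2 = (a m - a m') ^ 2 := by
            rw [hd]; ring
        _ < 1 := habs
    have hsq3 : ((m i : ℝ) - (m' i : ℝ)) ^ 2 < 3 := by nlinarith
    have hsqZ : (m i - m' i) ^ 2 < 3 := by exact_mod_cast hsq3
    have hii : m i = m' i := by
      have hle : m i - m' i ≤ 1 := by nlinarith [sq_nonneg (m i - m' i - 1)]
      have hge : -1 ≤ m i - m' i := by nlinarith [sq_nonneg (m i - m' i + 1)]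
      omega
    funext j
    rcases hcover j with h | h | h <;> rw [h]
    · exact hii
    · exact h1
    · exact h2
  -- the image lands in T
  have himg : f '' S ⊆ ↑T := by
    rintro _ ⟨m, hm, rfl⟩
    obtain ⟨⟨ha0, haN⟩, hperp⟩ := key m hm
    simp only [hT, hf, Finset.coe_product, Set.mem_prod, Finset.mem_coe,
      Finset.mem_Icc, Finset.mem_univ, and_true]
    have hwb : ∀ j, -B ≤ m j - round ((⌊a m⌋ : ℝ) * v j) ∧
        m j - round ((⌊a m⌋ : ℝ) * v j) ≤ B := by
      intro j
      have h1 : |(m j : ℝ) - a m * v j| ≤ N * θ := hperp j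
      have h2 : |(a m - ⌊a m⌋) * v j| ≤ 1 := by
        rw [abs_mul]
        have hb1 : |a m - ⌊a m⌋| ≤ 1 := by
          rw [abs_le]
          constructor <;>
            linarith [Int.floor_le (a m), Int.lt_floor_add_one (a m)]
        have hb2 : |v j| ≤ 1 := by
          rw [← Real.sqrt_one, ← Real.sqrt_sq_eq_abs]
          exact Real.sqrt_le_sqrt (hvle j)
        calc |a m - ⌊a m⌋| * |v j| ≤ 1 * 1 :=
              mul_le_mul hb1 hb2 (abs_nonneg _) zero_le_one
          _ = 1 := by ring
      have h3 : |(⌊a m⌋ : ℝ) * v j - round ((⌊a m⌋ : ℝ) * v j)| ≤ 1/2 :=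
        abs_sub_round _
      have h4 : |(m j : ℝ) - round ((⌊a m⌋ : ℝ) * v j)| ≤ N * θ + 3/2 := by
        have e1 : (m j : ℝ) - round ((⌊a m⌋ : ℝ) * v j)
            = ((m j : ℝ) - a m * v j) + ((a m - ⌊a m⌋) * v j)
              + ((⌊a m⌋ : ℝ) * v j - round ((⌊a m⌋ : ℝ) * v j)) := by ring
        rw [e1]
        calc |((m j : ℝ) - a m * v j) + ((a m - ⌊a m⌋) * v j)
              + ((⌊a m⌋ : ℝ) * v j - round ((⌊a m⌋ : ℝ) * v j))|
            ≤ |(m j : ℝ) - a m * v j| + |(a m - ⌊a m⌋) * v j|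
              + |(⌊a m⌋ : ℝ) * v j - round ((⌊a m⌋ : ℝ) * v j)| :=
              abs_add_three _ _ _
          _ ≤ N * θ + 3/2 := by linarith
      have h5 : |((m j - round ((⌊a m⌋ : ℝ) * v j) : ℤ) : ℝ)| ≤ (B : ℝ) := by
        push_cast
        have hceil : N * θ ≤ (⌈N * θ⌉ : ℝ) := Int.le_ceil _
        have : (B : ℝ) = (⌈N * θ⌉ : ℝ) + 2 := by rw [hB]; push_cast; ring
        rw [this]
        calc |(m j : ℝ) - (round ((⌊a m⌋ : ℝ) * v j) : ℝ)| ≤ N * θ + 3/2 := h4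
          _ ≤ (⌈N * θ⌉ : ℝ) + 2 := by linarith
      rw [abs_le] at h5
      constructor
      · exact_mod_cast h5.1
      · exact_mod_cast h5.2
    refine ⟨⟨Int.floor_nonneg.mpr ha0, ?_⟩, hwb _, hwb _⟩
    calc ⌊a m⌋ ≤ ⌊N⌋ := Int.floor_le_floor haN
      _ ≤ ⌈N⌉ := Int.floor_le_ceil N
  -- counting
  have hTfin : (↑T : Set (ℤ × ℤ × ℤ × ZMod 2)).Finite := T.finite_toSet
  have hSfin : S.Finite :=
    Set.Finite.of_finite_image (hTfin.subset himg) hinj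
  have hcount : S.ncard ≤ T.card := by
    calc S.ncard = (f '' S).ncard := (Set.ncard_image_of_injOn hinj).symm
      _ ≤ (↑T : Set (ℤ × ℤ × ℤ × ZMod 2)).ncard := Set.ncard_le_ncard himg hTfin
      _ = T.card := Set.ncard_coe_finset T
  -- compute and bound T.card
  have hcard : (T.card : ℝ) ≤ (N + 2) * ((2 * (N * θ) + 7) * ((2 * (N * θ) + 7) * 2)) := by
    have hc : T.card = (⌈N⌉ + 1).toNat * ((2 * B + 1).toNat * ((2 * B + 1).toNat * 2)) := by
      have hBB : B + 1 - -B = 2 * B + 1 := by ring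
      have hNN : ⌈N⌉ + 1 - 0 = ⌈N⌉ + 1 := by ring
      rw [hT]
      simp only [Finset.card_product, Int.card_Icc, Finset.card_univ,
        ZMod.card, hBB, hNN]
    rw [hc]
    have hN1 : (1:ℤ) ≤ ⌈N⌉ := by exact_mod_cast Int.one_le_ceil_iff.mpr (by linarith)
    have hB1 : (2:ℤ) ≤ B := by
      have : (0:ℤ) ≤ ⌈N * θ⌉ := Int.ceil_nonneg hNθ
      omega
    have e1 : ((⌈N⌉ + 1).toNat : ℝ) = (⌈N⌉ : ℝ) + 1 := by
      exact_mod_cast congrArg (fun z : ℤ => (z : ℝ))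
        (Int.toNat_of_nonneg (show (0:ℤ) ≤ ⌈N⌉ + 1 by omega))
    have e2 : ((2 * B + 1).toNat : ℝ) = 2 * (B : ℝ) + 1 := by
      exact_mod_cast congrArg (fun z : ℤ => (z : ℝ))
        (Int.toNat_of_nonneg (show (0:ℤ) ≤ 2 * B + 1 by omega))
    push_cast
    rw [e1, e2]
    have b1 : (⌈N⌉ : ℝ) + 1 ≤ N + 2 := by
      have := Int.ceil_le_floor_add_one N
      have := Int.ceil_lt_add_one N
      linarith
    have b2 : 2 * (B : ℝ) + 1 ≤ 2 * (N * θ) + 7 := by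
      have : (B : ℝ) = (⌈N * θ⌉ : ℝ) + 2 := by rw [hB]; push_cast; ring
      rw [this]
      have := Int.ceil_lt_add_one (N * θ)
      linarith
    have p1 : (0:ℝ) ≤ (⌈N⌉ : ℝ) + 1 := by positivity
    have p2 : (0:ℝ) ≤ 2 * (B:ℝ) + 1 := by
      have : (2:ℝ) ≤ (B:ℝ) := by exact_mod_cast hB1
      linarith
    have p3 : (0:ℝ) ≤ 2 * (N * θ) + 7 := by linarith
    nlinarith [mul_le_mul b2 b2 p2 p3]
  have hfinal : (N + 2) * ((2 * (N * θ) + 7) * ((2 * (N * θ) + 7) * 2))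
      ≤ 300 * N * (N * θ + 1) ^ 2 := by
    nlinarith [hNθ, hN, sq_nonneg (N * θ + 1), mul_nonneg hNθ hNθ,
      mul_nonneg (mul_nonneg hNθ hNθ) (by linarith : (0:ℝ) ≤ N - 1),
      mul_nonneg hNθ (by linarith : (0:ℝ) ≤ N - 1)]
  calc (S.ncard : ℝ) ≤ (T.card : ℝ) := by exact_mod_cast hcount
    _ ≤ (N + 2) * ((2 * (N * θ) + 7) * ((2 * (N * θ) + 7) * 2)) := hcard
    _ ≤ 300 * N * (N * θ + 1) ^ 2 := hfinal

theorem cone_lattice_point_count :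
    ∃ C : ℝ, 0 < C ∧
      ∀ v : EuclideanSpace ℝ (Fin 3), ‖v‖ = 1 →
      ∀ N : ℝ, 1 ≤ N → ∀ θ : ℝ, 0 < θ → θ ≤ 1 →
      (Set.ncard {m : Fin 3 → ℤ |
          0 < enorm' m ∧ enorm' m ≤ N ∧
          enorm' m * Real.cos θ ≤ ∑ i, (m i : ℝ) * v i} : ℝ)
        ≤ C * N * (N * θ + 1) ^ 2 := by
  refine ⟨300, by norm_num, ?_⟩
  intro v hv N hN θ hθ hθ1
  have hv2 : ∑ j, ((fun j => v j) j) ^ 2 = 1 := by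
    rw [EuclideanSpace.norm_eq] at hv
    have h0 : (0:ℝ) ≤ ∑ j, ‖v j‖ ^ 2 :=
      Finset.sum_nonneg fun j _ => sq_nonneg _
    have := congrArg (· ^ 2) hv
    simp only [Real.sq_sqrt h0, one_pow] at this
    simpa [Real.norm_eq_abs, sq_abs] using this
  exact cone_aux (fun j => v j) hv2 N hN θ hθ hθ1
end

section
/- For every T > 0 and every σ ∈ [0, 1] there exists a constant C(T) > 0 such that for every real a ≥ 1 and all times t₁, t₁', t₂ with 0 ≤ t₂ ≤ min(t₁, t₁') and max(t₁, t₁') ≤ T: | ∫₀^{t₂} a^{−2} ( sin((t₁ − s)a) − sin((t₁' − s)a) ) sin((t₂ − s)a) ds | ≤ C(T) a^{−2 + σ} |t₁ − t₁'|^σ. -/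
open Real

private lemma interp_bound (σ : ℝ) (hσ0 : 0 ≤ σ) (hσ1 : σ ≤ 1)
    (x b : ℝ) (hx : 0 ≤ x) (hb : |b| ≤ x) (hb2 : |b| ≤ 2) :
    |b| ≤ 2 ^ (1 - σ) * x ^ σ := by
  rcases le_total x 2 with h | h
  · calc |b| ≤ x := hb
      _ = x ^ (σ + (1 - σ)) := by norm_num
      _ = x ^ σ * x ^ (1 - σ) := Real.rpow_add' hx (by norm_num)
      _ ≤ x ^ σ * 2 ^ (1 - σ) :=
          mul_le_mul_of_nonneg_left
            (Real.rpow_le_rpow hx h (by linarith)) (Real.rpow_nonneg hx σ)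
      _ = 2 ^ (1 - σ) * x ^ σ := by ring
  · calc |b| ≤ 2 := hb2
      _ = 2 ^ (σ + (1 - σ)) := by norm_num
      _ = 2 ^ σ * 2 ^ (1 - σ) := Real.rpow_add' (by norm_num) (by norm_num)
      _ ≤ x ^ σ * 2 ^ (1 - σ) :=
          mul_le_mul_of_nonneg_right
            (Real.rpow_le_rpow (by norm_num) h hσ0)
            (Real.rpow_nonneg (by norm_num) _)
      _ = 2 ^ (1 - σ) * x ^ σ := by ring

theorem correlation_kernel_holder_in_time
    (T : ℝ) (hT : 0 < T) (σ : ℝ) (hσ0 : 0 ≤ σ) (hσ1 : σ ≤ 1) :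
    ∃ C : ℝ, 0 < C ∧ ∀ a : ℝ, 1 ≤ a → ∀ t₁ t₁' t₂ : ℝ,
      0 ≤ t₂ → t₂ ≤ min t₁ t₁' → max t₁ t₁' ≤ T →
      |∫ s in (0:ℝ)..t₂,
          (Real.sin ((t₁ - s) * a) - Real.sin ((t₁' - s) * a)) *
            Real.sin ((t₂ - s) * a) / a ^ 2|
        ≤ C * a ^ (-2 + σ) * |t₁ - t₁'| ^ σ := by
  refine ⟨2 * T, by positivity, ?_⟩
  intro a ha t₁ t₁' t₂ ht₂ hmin hmax
  have ha0 : (0:ℝ) < a := lt_of_lt_of_le one_pos ha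
  set Δ : ℝ := |t₁ - t₁'| with hΔ
  have hΔ0 : 0 ≤ Δ := abs_nonneg _
  set M : ℝ := 2 ^ (1 - σ) * (a * Δ) ^ σ / a ^ 2 with hM
  have hbound : ∀ s ∈ Set.uIoc (0:ℝ) t₂,
      ‖(Real.sin ((t₁ - s) * a) - Real.sin ((t₁' - s) * a)) *
          Real.sin ((t₂ - s) * a) / a ^ 2‖ ≤ M := by
    intro s _
    have h1 : |Real.sin ((t₁ - s) * a) - Real.sin ((t₁' - s) * a)| ≤ a * Δ := by
      calc |Real.sin ((t₁ - s) * a) - Real.sin ((t₁' - s) * a)|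
          ≤ |(t₁ - s) * a - (t₁' - s) * a| := by
            rw [Real.sin_sub_sin, abs_mul, abs_mul, abs_two]
            calc 2 * |Real.sin (((t₁ - s) * a - (t₁' - s) * a) / 2)| *
                  |Real.cos (((t₁ - s) * a + (t₁' - s) * a) / 2)|
                ≤ 2 * |((t₁ - s) * a - (t₁' - s) * a) / 2| * 1 := by
                  apply mul_le_mul _ (Real.abs_cos_le_one _) (abs_nonneg _) (by positivity)
                  exact mul_le_mul_of_nonneg_left (Real.abs_sin_le_abs) (by norm_num)
              _ = |(t₁ - s) * a - (t₁' - s) * a| := by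
                  rw [mul_one, abs_div, abs_two]; ring
        _ = a * Δ := by
            rw [show (t₁ - s) * a - (t₁' - s) * a = (t₁ - t₁') * a by ring,
              abs_mul, abs_of_pos ha0, mul_comm]
    have h2 : |Real.sin ((t₁ - s) * a) - Real.sin ((t₁' - s) * a)| ≤ 2 := by
      calc |Real.sin ((t₁ - s) * a) - Real.sin ((t₁' - s) * a)|
          ≤ |Real.sin ((t₁ - s) * a)| + |Real.sin ((t₁' - s) * a)| := abs_sub _ _
        _ ≤ 1 + 1 := add_le_add (Real.abs_sin_le_one _) (Real.abs_sin_le_one _)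
        _ = 2 := by norm_num
    have h3 := interp_bound σ hσ0 hσ1 (a * Δ) _ (by positivity) h1 h2
    rw [Real.norm_eq_abs, abs_div, abs_mul]
    rw [abs_of_pos (show (0:ℝ) < a ^ 2 by positivity)]
    rw [hM]
    have hnum : |Real.sin ((t₁ - s) * a) - Real.sin ((t₁' - s) * a)| *
        |Real.sin ((t₂ - s) * a)| ≤ 2 ^ (1 - σ) * (a * Δ) ^ σ := by
      calc |Real.sin ((t₁ - s) * a) - Real.sin ((t₁' - s) * a)| * |Real.sin ((t₂ - s) * a)|
          ≤ (2 ^ (1 - σ) * (a * Δ) ^ σ) * 1 := by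
            apply mul_le_mul h3 (Real.abs_sin_le_one _) (abs_nonneg _)
            positivity
        _ = 2 ^ (1 - σ) * (a * Δ) ^ σ := mul_one _
    exact div_le_div_of_nonneg_right hnum (by positivity) |>.trans_eq rfl
  have hint := intervalIntegral.norm_integral_le_of_norm_le_const hbound
  rw [Real.norm_eq_abs] at hint
  have ht₂T : t₂ ≤ T := le_trans hmin (le_trans (min_le_max) hmax)
  have hstep : |∫ s in (0:ℝ)..t₂,
      (Real.sin ((t₁ - s) * a) - Real.sin ((t₁' - s) * a)) *
        Real.sin ((t₂ - s) * a) / a ^ 2| ≤ M * T := by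
    refine le_trans hint ?_
    have : |t₂ - 0| ≤ T := by rw [sub_zero, abs_of_nonneg ht₂]; exact ht₂T
    have hM0 : 0 ≤ M := by rw [hM]; positivity
    exact mul_le_mul_of_nonneg_left this hM0
  refine le_trans hstep ?_
  have hrw : M = 2 ^ (1 - σ) * (a ^ (-2 + σ) * Δ ^ σ) := by
    rw [hM, Real.mul_rpow (le_of_lt ha0) hΔ0, Real.rpow_add ha0,
      Real.rpow_neg (le_of_lt ha0), show ((2:ℝ):ℝ) = ((2:ℕ):ℝ) by norm_num,
      Real.rpow_natCast]
    field_simp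
  have h2σ : (2:ℝ) ^ (1 - σ) ≤ 2 := by
    calc (2:ℝ) ^ (1 - σ) ≤ 2 ^ (1:ℝ) :=
      Real.rpow_le_rpow_of_exponent_le (by norm_num) (by linarith)
    _ = 2 := Real.rpow_one 2
  rw [hrw]
  have hpos : 0 ≤ a ^ (-2 + σ) * Δ ^ σ := by positivity
  calc 2 ^ (1 - σ) * (a ^ (-2 + σ) * Δ ^ σ) * T
      ≤ 2 * (a ^ (-2 + σ) * Δ ^ σ) * T := by
        gcongr
    _ = 2 * T * a ^ (-2 + σ) * Δ ^ σ := by ring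
end
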